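/- Let Ω be a locally compact Hausdorff space and X a pre-ordered Banach space whose closed cone X₊ is generating. Then there exists a constant α > 0, depending only on X, with the property that for every continuous compactly supported function f : Ω → X there exist continuous compactly supported functions f⁺, f⁻ : Ω → X with f⁺(ω), f⁻(ω) ∈ X₊ for all ω ∈ Ω, f = f⁺ − f⁻, supp(f⁺) ⊆ supp(f), supp(f⁻) ⊆ supp(f), and ‖f⁺(ω)‖ + ‖f⁻(ω)‖ ≤ α‖f(ω)‖ for all ω ∈ Ω (in particular ‖f⁺‖∞ ≤ α‖f‖∞ and ‖f⁻‖∞ ≤ α‖f‖∞). -/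

import Mathlib

open Filter Metric Function Set
open scoped Topology

/-- simple recursion helper with definitional equation lemmas -/
noncomputable def natRecAux {β : ℕ → Sort*} (b : β 0) (s : ∀ k, β k → β (k+1)) : ∀ k, β k
  | 0 => b
  | k+1 => s k (natRecAux b s k)

theorem natRecAux_succ {β : ℕ → Sort*} (b : β 0) (s : ∀ k, β k → β (k+1)) (k : ℕ) :
    natRecAux b s (k+1) = s k (natRecAux b s k) := rfl

section Aux

variable {X : Type*} [NormedAddCommGroup X] [NormedSpace ℝ X]
variable {Xpos : Set X}

lemma cone_zero_mem (hsmul : ∀ (t : ℝ), 0 ≤ t → ∀ x ∈ Xpos, t • x ∈ Xpos)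
    (hgen : ∀ x : X, ∃ a ∈ Xpos, ∃ b ∈ Xpos, x = a - b) : (0:X) ∈ Xpos := by
  obtain ⟨a, ha, -⟩ := hgen 0
  simpa using hsmul 0 le_rfl a ha

lemma cone_sum_mem (hadd : ∀ x ∈ Xpos, ∀ y ∈ Xpos, x + y ∈ Xpos) (h0 : (0:X) ∈ Xpos)
    {ι : Type*} (s : Finset ι) (g : ι → X) (hg : ∀ i ∈ s, g i ∈ Xpos) :
    ∑ i ∈ s, g i ∈ Xpos := by
  classical
  induction s using Finset.induction_on with
  | empty => simpa using h0
  | insert _ _ hnot ih =>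
    rw [Finset.sum_insert hnot]
    exact hadd _ (hg _ (Finset.mem_insert_self _ _))
      _ (ih fun i hi => hg i (Finset.mem_insert_of_mem hi))

lemma cone_hasSum_mem (hcl : IsClosed Xpos) (hadd : ∀ x ∈ Xpos, ∀ y ∈ Xpos, x + y ∈ Xpos)
    (h0 : (0:X) ∈ Xpos) {g : ℕ → X} {a : X}
    (hg : ∀ k, g k ∈ Xpos) (h : HasSum g a) : a ∈ Xpos :=
  hcl.mem_of_tendsto h.tendsto_sum_nat
    (Eventually.of_forall fun n => cone_sum_mem hadd h0 _ _ fun i _ => hg i)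

/-- Andô-type bounded decomposition theorem. -/
lemma boundedDecomp [CompleteSpace X] (hcl : IsClosed Xpos)
    (hadd : ∀ x ∈ Xpos, ∀ y ∈ Xpos, x + y ∈ Xpos)
    (hsmul : ∀ (t : ℝ), 0 ≤ t → ∀ x ∈ Xpos, t • x ∈ Xpos)
    (hgen : ∀ x : X, ∃ a ∈ Xpos, ∃ b ∈ Xpos, x = a - b) :
    ∃ M : ℝ, 0 < M ∧ ∀ x : X, ∃ a b : X, a ∈ Xpos ∧ b ∈ Xpos ∧ x = a - b ∧
      ‖a‖ ≤ M * ‖x‖ ∧ ‖b‖ ≤ M * ‖x‖ := by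
  classical
  have h0 := cone_zero_mem hsmul hgen
  set D : ℕ → Set X := fun n =>
    {x | ∃ a b : X, a ∈ Xpos ∧ b ∈ Xpos ∧ x = a - b ∧ ‖a‖ ≤ n ∧ ‖b‖ ≤ n} with hD
  have hcover : (⋃ n, closure (D n)) = univ := by
    ext x
    simp only [mem_iUnion, mem_univ, iff_true]
    obtain ⟨a, ha, b, hb, hx⟩ := hgen x
    obtain ⟨n, hn⟩ := exists_nat_ge (max ‖a‖ ‖b‖)
    exact ⟨n, subset_closure ⟨a, b, ha, hb, hx,
      le_trans (le_max_left _ _) hn, le_trans (le_max_right _ _) hn⟩⟩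
  have hne : Nonempty X := ⟨0⟩
  obtain ⟨n, z, hz⟩ := nonempty_interior_of_iUnion_of_closed
    (fun n : ℕ => isClosed_closure (s := D n)) hcover
  obtain ⟨r, hr, hball⟩ := Metric.mem_nhds_iff.mp (mem_interior_iff_mem_nhds.mp hz)
  have hconv : Convex ℝ (D n) := by
    rintro x ⟨a, b, ha, hb, hxab, hna, hnb⟩ y ⟨a', b', ha', hb', hyab, hna', hnb'⟩ s t hs ht hst
    refine ⟨s • a + t • a', s • b + t • b',
      hadd _ (hsmul s hs a ha) _ (hsmul t ht a' ha'),
      hadd _ (hsmul s hs b hb) _ (hsmul t ht b' hb'), ?_, ?_, ?_⟩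
    · rw [hxab, hyab]; module
    · calc ‖s • a + t • a'‖ ≤ ‖s • a‖ + ‖t • a'‖ := norm_add_le _ _
        _ = s * ‖a‖ + t * ‖a'‖ := by
            rw [norm_smul, norm_smul, Real.norm_of_nonneg hs, Real.norm_of_nonneg ht]
        _ ≤ s * n + t * n := by gcongr
        _ = n := by rw [← add_mul, hst, one_mul]
    · calc ‖s • b + t • b'‖ ≤ ‖s • b‖ + ‖t • b'‖ := norm_add_le _ _
        _ = s * ‖b‖ + t * ‖b'‖ := by
            rw [norm_smul, norm_smul, Real.norm_of_nonneg hs, Real.norm_of_nonneg ht]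
        _ ≤ s * n + t * n := by gcongr
        _ = n := by rw [← add_mul, hst, one_mul]
  have hsymm : ∀ x ∈ D n, -x ∈ D n := by
    rintro x ⟨a, b, ha, hb, hxab, hna, hnb⟩
    exact ⟨b, a, hb, ha, by rw [hxab]; abel, hnb, hna⟩
  have hsymm_cl : ∀ x ∈ closure (D n), -x ∈ closure (D n) := by
    intro x hx
    rw [Metric.mem_closure_iff] at hx ⊢
    intro ε hε
    obtain ⟨d, hd, hdist⟩ := hx ε hε
    refine ⟨-d, hsymm d hd, ?_⟩
    rw [dist_eq_norm] at hdist ⊢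
    simpa [norm_sub_rev, neg_add_eq_sub] using hdist
  have hball0 : ∀ y : X, ‖y‖ < r → y ∈ closure (D n) := by
    intro y hy
    have h1 : z + y ∈ closure (D n) := hball (by
      simp only [mem_ball, dist_eq_norm, add_sub_cancel_left]; exact hy)
    have h2 : -(z - y) ∈ closure (D n) := hsymm_cl _ (hball (by
      simp only [mem_ball, dist_eq_norm, sub_sub_cancel_left, norm_neg]; exact hy))
    have hc := (hconv.closure) h1 h2 (by norm_num : (0:ℝ) ≤ 1/2)
      (by norm_num : (0:ℝ) ≤ 1/2) (by norm_num)
    have heq : (1/2 : ℝ) • (z + y) + (1/2 : ℝ) • (-(z - y)) = y := by module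
    rwa [heq] at hc
  set κ : ℝ := 2 * ((n : ℝ) + 1) / r with hκ
  have hκpos : 0 < κ := by positivity
  have hK : ∀ (w : X) (δ : ℝ), 0 < δ → ∃ a b : X, a ∈ Xpos ∧ b ∈ Xpos ∧
      ‖a‖ ≤ κ * ‖w‖ ∧ ‖b‖ ≤ κ * ‖w‖ ∧ ‖w - (a - b)‖ < δ := by
    intro w δ hδ
    rcases eq_or_ne w 0 with rfl | hw
    · exact ⟨0, 0, h0, h0, by simp, by simp, by simpa using hδ⟩
    · have hw' : 0 < ‖w‖ := norm_pos_iff.mpr hw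
      set t : ℝ := 2 * ‖w‖ / r with htdef
      have htpos : 0 < t := by positivity
      have h1 : ‖t⁻¹ • w‖ < r := by
        rw [norm_smul, norm_inv, Real.norm_of_nonneg htpos.le]
        have : t⁻¹ * ‖w‖ = r / 2 := by
          rw [htdef]; field_simp
        rw [this]; linarith
      have hmem := hball0 _ h1
      rw [Metric.mem_closure_iff] at hmem
      obtain ⟨d, hd, hdd⟩ := hmem (δ / t) (by positivity)
      obtain ⟨a, b, ha, hb, hdab, hna, hnb⟩ := hd
      refine ⟨t • a, t • b, hsmul t htpos.le a ha, hsmul t htpos.le b hb, ?_, ?_, ?_⟩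
      · rw [norm_smul, Real.norm_of_nonneg htpos.le]
        calc t * ‖a‖ ≤ t * ((n : ℝ) + 1) := by
              have : ‖a‖ ≤ (n : ℝ) + 1 := le_trans hna (by linarith)
              exact mul_le_mul_of_nonneg_left this htpos.le
          _ = κ * ‖w‖ := by rw [htdef, hκ]; field_simp
      · rw [norm_smul, Real.norm_of_nonneg htpos.le]
        calc t * ‖b‖ ≤ t * ((n : ℝ) + 1) := by
              have : ‖b‖ ≤ (n : ℝ) + 1 := le_trans hnb (by linarith)
              exact mul_le_mul_of_nonneg_left this htpos.le
          _ = κ * ‖w‖ := by rw [htdef, hκ]; field_simp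
      · have hw2 : w - (t • a - t • b) = t • (t⁻¹ • w - d) := by
          rw [hdab, smul_sub, smul_sub, smul_inv_smul₀ (ne_of_gt htpos)]
        rw [hw2, norm_smul, Real.norm_of_nonneg htpos.le]
        rw [dist_eq_norm] at hdd
        calc t * ‖t⁻¹ • w - d‖ < t * (δ / t) := by
              exact mul_lt_mul_of_pos_left hdd htpos
          _ = δ := by field_simp
  -- now iterate
  refine ⟨2 * κ, by positivity, ?_⟩
  intro x
  rcases eq_or_ne x 0 with rfl | hx
  · exact ⟨0, 0, h0, h0, by simp, by simp, by simp⟩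
  have hx' : 0 < ‖x‖ := norm_pos_iff.mpr hx
  choose aF bF haF hbF hnaF hnbF herrF using hK
  have hδpos : ∀ k : ℕ, 0 < ‖x‖ / 2 ^ (k+1) := fun k => div_pos hx' (by positivity)
  set zseq : ℕ → X := natRecAux (β := fun _ => X) x
    (fun k w => w - (aF w (‖x‖ / 2 ^ (k+1)) (hδpos k) - bF w (‖x‖ / 2 ^ (k+1)) (hδpos k)))
    with hzseq
  set A : ℕ → X := fun k => aF (zseq k) (‖x‖ / 2 ^ (k+1)) (hδpos k) with hA
  set B : ℕ → X := fun k => bF (zseq k) (‖x‖ / 2 ^ (k+1)) (hδpos k) with hB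
  have hrec : ∀ k, zseq (k+1) = zseq k - (A k - B k) := fun k => rfl
  have hzb : ∀ k, ‖zseq k‖ ≤ ‖x‖ / 2 ^ k := by
    intro k
    induction k with
    | zero => simp [hzseq, natRecAux]
    | succ k ih =>
      rw [hrec k]
      exact le_of_lt (herrF (zseq k) (‖x‖ / 2 ^ (k+1)) (hδpos k))
  have hAmem : ∀ k, A k ∈ Xpos := fun k => haF _ _ _
  have hBmem : ∀ k, B k ∈ Xpos := fun k => hbF _ _ _
  have hAn : ∀ k, ‖A k‖ ≤ κ * ‖x‖ * (1/2 : ℝ) ^ k := by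
    intro k
    calc ‖A k‖ ≤ κ * ‖zseq k‖ := hnaF _ _ _
      _ ≤ κ * (‖x‖ / 2 ^ k) := mul_le_mul_of_nonneg_left (hzb k) hκpos.le
      _ = κ * ‖x‖ * (1/2 : ℝ) ^ k := by rw [div_pow, one_pow]; ring
  have hBn : ∀ k, ‖B k‖ ≤ κ * ‖x‖ * (1/2 : ℝ) ^ k := by
    intro k
    calc ‖B k‖ ≤ κ * ‖zseq k‖ := hnbF _ _ _
      _ ≤ κ * (‖x‖ / 2 ^ k) := mul_le_mul_of_nonneg_left (hzb k) hκpos.le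
      _ = κ * ‖x‖ * (1/2 : ℝ) ^ k := by rw [div_pow, one_pow]; ring
  have hgeo : Summable (fun k : ℕ => κ * ‖x‖ * (1/2 : ℝ) ^ k) :=
    summable_geometric_two.mul_left _
  have hsumA : Summable A := Summable.of_norm_bounded hgeo hAn
  have hsumB : Summable B := Summable.of_norm_bounded hgeo hBn
  have hsumAn : Summable (fun k => ‖A k‖) :=
    Summable.of_nonneg_of_le (fun k => norm_nonneg _) hAn hgeo
  have hsumBn : Summable (fun k => ‖B k‖) :=
    Summable.of_nonneg_of_le (fun k => norm_nonneg _) hBn hgeo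
  have htsum_geo : (∑' k : ℕ, κ * ‖x‖ * (1/2 : ℝ) ^ k) = 2 * κ * ‖x‖ := by
    rw [tsum_mul_left, tsum_geometric_two]; ring
  refine ⟨∑' k, A k, ∑' k, B k,
    cone_hasSum_mem hcl hadd h0 hAmem hsumA.hasSum,
    cone_hasSum_mem hcl hadd h0 hBmem hsumB.hasSum, ?_, ?_, ?_⟩
  · -- x = a - b
    have hab : HasSum (fun k => A k - B k) ((∑' k, A k) - ∑' k, B k) :=
      hsumA.hasSum.sub hsumB.hasSum
    have htel : ∀ m : ℕ, (∑ k ∈ Finset.range m, (A k - B k)) = x - zseq m := by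
      intro m
      have : ∀ k, A k - B k = zseq k - zseq (k+1) := by
        intro k; rw [hrec k]; abel
      calc (∑ k ∈ Finset.range m, (A k - B k))
          = ∑ k ∈ Finset.range m, (zseq k - zseq (k+1)) := by
            exact Finset.sum_congr rfl fun k _ => this k
        _ = zseq 0 - zseq m := Finset.sum_range_sub' zseq m
        _ = x - zseq m := rfl
    have hz0 : Tendsto zseq atTop (𝓝 0) := by
      apply squeeze_zero_norm hzb
      have : (fun m : ℕ => ‖x‖ / 2 ^ m) = fun m : ℕ => ‖x‖ * (1/2 : ℝ) ^ m := by
        funext m; rw [div_pow, one_pow]; ring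
      rw [this]
      simpa using (tendsto_pow_atTop_nhds_zero_of_lt_one (by norm_num : (0:ℝ) ≤ 1/2)
        (by norm_num : (1/2 : ℝ) < 1)).const_mul ‖x‖
    have h2 : Tendsto (fun m => ∑ k ∈ Finset.range m, (A k - B k)) atTop (𝓝 x) := by
      simp only [htel]
      have h3 : Tendsto (fun _ : ℕ => x) atTop (𝓝 x) := tendsto_const_nhds
      simpa using h3.sub hz0
    exact tendsto_nhds_unique h2 hab.tendsto_sum_nat
  · calc ‖∑' k, A k‖ ≤ ∑' k, ‖A k‖ := norm_tsum_le_tsum_norm hsumAn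
      _ ≤ ∑' k : ℕ, κ * ‖x‖ * (1/2 : ℝ) ^ k := Summable.tsum_le_tsum hAn hsumAn hgeo
      _ = 2 * κ * ‖x‖ := htsum_geo
  · calc ‖∑' k, B k‖ ≤ ∑' k, ‖B k‖ := norm_tsum_le_tsum_norm hsumBn
      _ ≤ ∑' k : ℕ, κ * ‖x‖ * (1/2 : ℝ) ^ k := Summable.tsum_le_tsum hBn hsumBn hgeo
      _ = 2 * κ * ‖x‖ := htsum_geo

/-- Approximate continuous selection via partitions of unity. -/
lemma approx_sel {Y : Type*} [TopologicalSpace Y] [NormalSpace Y] [ParacompactSpace Y]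
    (hadd : ∀ x ∈ Xpos, ∀ y ∈ Xpos, x + y ∈ Xpos) (h0 : (0:X) ∈ Xpos)
    (hsmul : ∀ (t : ℝ), 0 ≤ t → ∀ x ∈ Xpos, t • x ∈ Xpos)
    {M : ℝ} (hMpos : 0 < M)
    (hM : ∀ x : X, ∃ a b : X, a ∈ Xpos ∧ b ∈ Xpos ∧ x = a - b ∧
      ‖a‖ ≤ M * ‖x‖ ∧ ‖b‖ ≤ M * ‖x‖)
    (u : Y → X) (hu : Continuous u) (c : ℝ) (hc : ∀ y, ‖u y‖ ≤ c)
    {ε : ℝ} (hε : 0 < ε) :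
    ∃ va vb : Y → X, Continuous va ∧ Continuous vb ∧ (∀ y, va y ∈ Xpos) ∧
      (∀ y, vb y ∈ Xpos) ∧ (∀ y, ‖va y‖ ≤ M * c) ∧ (∀ y, ‖vb y‖ ≤ M * c) ∧
      ∀ y, ‖u y - (va y - vb y)‖ ≤ ε := by
  classical
  choose A B hA hB hAB hnA hnB using hM
  set U : Y → Set Y := fun i => u ⁻¹' ball (u i) ε with hU
  have hUo : ∀ i, IsOpen (U i) := fun i => isOpen_ball.preimage hu
  have hUc : (univ : Set Y) ⊆ ⋃ i, U i := fun y _ =>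
    mem_iUnion.2 ⟨y, by simp [hU, hε]⟩
  obtain ⟨ρ, hρ⟩ := PartitionOfUnity.exists_isSubordinate isClosed_univ U hUo hUc
  refine ⟨fun y => ∑ᶠ i, ρ i y • A (u i), fun y => ∑ᶠ i, ρ i y • B (u i),
    hρ.continuous_finsum_smul hUo (fun i => continuousOn_const),
    hρ.continuous_finsum_smul hUo (fun i => continuousOn_const), ?_, ?_, ?_, ?_, ?_⟩
  · intro y
    beta_reduce
    rw [← ρ.sum_finsupport_smul_eq_finsum (fun i _ => A (u i))]
    exact cone_sum_mem hadd h0 _ _ fun i _ => hsmul _ (ρ.nonneg i y) _ (hA (u i))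
  · intro y
    beta_reduce
    rw [← ρ.sum_finsupport_smul_eq_finsum (fun i _ => B (u i))]
    exact cone_sum_mem hadd h0 _ _ fun i _ => hsmul _ (ρ.nonneg i y) _ (hB (u i))
  · intro y
    beta_reduce
    rw [← ρ.sum_finsupport_smul_eq_finsum (fun i _ => A (u i))]
    have hsum1 : ∑ i ∈ ρ.finsupport y, ρ i y = 1 := ρ.sum_finsupport (mem_univ y)
    calc ‖∑ i ∈ ρ.finsupport y, ρ i y • A (u i)‖
        ≤ ∑ i ∈ ρ.finsupport y, ‖ρ i y • A (u i)‖ := norm_sum_le _ _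
      _ ≤ ∑ i ∈ ρ.finsupport y, ρ i y * (M * c) := by
          apply Finset.sum_le_sum
          intro i _
          rw [norm_smul, Real.norm_of_nonneg (ρ.nonneg i y)]
          exact mul_le_mul_of_nonneg_left
            (le_trans (hnA (u i)) (mul_le_mul_of_nonneg_left (hc i) hMpos.le))
            (ρ.nonneg i y)
      _ = M * c := by rw [← Finset.sum_mul, hsum1, one_mul]
  · intro y
    beta_reduce
    rw [← ρ.sum_finsupport_smul_eq_finsum (fun i _ => B (u i))]
    have hsum1 : ∑ i ∈ ρ.finsupport y, ρ i y = 1 := ρ.sum_finsupport (mem_univ y)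
    calc ‖∑ i ∈ ρ.finsupport y, ρ i y • B (u i)‖
        ≤ ∑ i ∈ ρ.finsupport y, ‖ρ i y • B (u i)‖ := norm_sum_le _ _
      _ ≤ ∑ i ∈ ρ.finsupport y, ρ i y * (M * c) := by
          apply Finset.sum_le_sum
          intro i _
          rw [norm_smul, Real.norm_of_nonneg (ρ.nonneg i y)]
          exact mul_le_mul_of_nonneg_left
            (le_trans (hnB (u i)) (mul_le_mul_of_nonneg_left (hc i) hMpos.le))
            (ρ.nonneg i y)
      _ = M * c := by rw [← Finset.sum_mul, hsum1, one_mul]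
  · intro y
    beta_reduce
    rw [← ρ.sum_finsupport_smul_eq_finsum (fun i _ => A (u i)),
        ← ρ.sum_finsupport_smul_eq_finsum (fun i _ => B (u i))]
    have hsum1 : ∑ i ∈ ρ.finsupport y, ρ i y = 1 := ρ.sum_finsupport (mem_univ y)
    have key : u y - ((∑ i ∈ ρ.finsupport y, ρ i y • A (u i)) -
        ∑ i ∈ ρ.finsupport y, ρ i y • B (u i)) =
        ∑ i ∈ ρ.finsupport y, ρ i y • (u y - u i) := by
      have h1 : ∑ i ∈ ρ.finsupport y, ρ i y • (u y - u i)
          = (∑ i ∈ ρ.finsupport y, ρ i y • u y) - ∑ i ∈ ρ.finsupport y, ρ i y • u i := by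
        rw [← Finset.sum_sub_distrib]
        exact Finset.sum_congr rfl fun i _ => smul_sub _ _ _
      have h2 : (∑ i ∈ ρ.finsupport y, ρ i y • u y) = u y := by
        rw [← Finset.sum_smul, hsum1, one_smul]
      have h3 : ∑ i ∈ ρ.finsupport y, ρ i y • u i
          = (∑ i ∈ ρ.finsupport y, ρ i y • A (u i)) -
            ∑ i ∈ ρ.finsupport y, ρ i y • B (u i) := by
        rw [← Finset.sum_sub_distrib]
        refine Finset.sum_congr rfl fun i _ => ?_
        rw [← smul_sub, ← hAB (u i)]
      rw [h1, h2, h3]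
    rw [key]
    calc ‖∑ i ∈ ρ.finsupport y, ρ i y • (u y - u i)‖
        ≤ ∑ i ∈ ρ.finsupport y, ‖ρ i y • (u y - u i)‖ := norm_sum_le _ _
      _ ≤ ∑ i ∈ ρ.finsupport y, ρ i y * ε := by
          apply Finset.sum_le_sum
          intro i hi
          rw [norm_smul, Real.norm_of_nonneg (ρ.nonneg i y)]
          apply mul_le_mul_of_nonneg_left _ (ρ.nonneg i y)
          have hy : y ∈ U i := hρ i (subset_closure ((ρ.mem_finsupport y).mp hi))
          have : dist (u y) (u i) < ε := hy
          rw [dist_eq_norm] at this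
          exact this.le
      _ = ε := by rw [← Finset.sum_mul, hsum1, one_mul]

end Aux



/-- Let `Ω` be a locally compact Hausdorff space and `X` a pre-ordered
Banach space whose closed cone `Xpos` is generating. Then there is a constant
`α > 0`, depending only on `X`, such that every continuous compactly supported
`f : Ω → X` can be written as `f = f⁺ - f⁻` with `f⁺, f⁻` continuous, compactly
supported, `Xpos`-valued, with supports contained in the support of `f`, and
`‖f⁺ ω‖ + ‖f⁻ ω‖ ≤ α * ‖f ω‖` for all `ω` (in particular `‖f⁺ ω‖ ≤ α * ‖f ω‖`
and `‖f⁻ ω‖ ≤ α * ‖f ω‖`). -/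
theorem stmt4
    {Ω : Type*} [TopologicalSpace Ω] [LocallyCompactSpace Ω] [T2Space Ω]
    {X : Type*} [NormedAddCommGroup X] [NormedSpace ℝ X] [CompleteSpace X]
    (Xpos : Set X) (hXpos_closed : IsClosed Xpos)
    (hXpos_add : ∀ x ∈ Xpos, ∀ y ∈ Xpos, x + y ∈ Xpos)
    (hXpos_smul : ∀ (t : ℝ), 0 ≤ t → ∀ x ∈ Xpos, t • x ∈ Xpos)
    (hgen : ∀ x : X, ∃ a ∈ Xpos, ∃ b ∈ Xpos, x = a - b) :
    ∃ (α : ℝ), 0 < α ∧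
      ∀ f : Ω → X, Continuous f → HasCompactSupport f →
        ∃ (fp fm : Ω → X),
          Continuous fp ∧ Continuous fm ∧
          HasCompactSupport fp ∧ HasCompactSupport fm ∧
          (∀ ω : Ω, fp ω ∈ Xpos) ∧ (∀ ω : Ω, fm ω ∈ Xpos) ∧
          (∀ ω : Ω, f ω = fp ω - fm ω) ∧
          tsupport fp ⊆ tsupport f ∧ tsupport fm ⊆ tsupport f ∧
          (∀ ω : Ω, ‖fp ω‖ + ‖fm ω‖ ≤ α * ‖f ω‖) := by
  classical
  have h0 : (0:X) ∈ Xpos := cone_zero_mem hXpos_smul hgen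
  obtain ⟨M, hMpos, hM⟩ := boundedDecomp hXpos_closed hXpos_add hXpos_smul hgen
  -- the unit sphere
  set Y := {x : X // ‖x‖ = 1} with hY
  -- iterative construction of a bounded continuous selection on the sphere
  have step : ∀ (k : ℕ) (u : Y → X), Continuous u → (∀ y, ‖u y‖ ≤ (1/2:ℝ)^k) →
      ∃ p : (Y → X) × (Y → X), Continuous p.1 ∧ Continuous p.2 ∧
        (∀ y, p.1 y ∈ Xpos) ∧ (∀ y, p.2 y ∈ Xpos) ∧
        (∀ y, ‖p.1 y‖ ≤ M * (1/2:ℝ)^k) ∧ (∀ y, ‖p.2 y‖ ≤ M * (1/2:ℝ)^k) ∧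
        (∀ y, ‖u y - (p.1 y - p.2 y)‖ ≤ (1/2:ℝ)^(k+1)) := by
    intro k u hu hb
    obtain ⟨va, vb, h1, h2, h3, h4, h5, h6, h7⟩ :=
      approx_sel hXpos_add h0 hXpos_smul hMpos hM u hu ((1/2:ℝ)^k) hb
        (ε := (1/2:ℝ)^(k+1)) (by positivity)
    exact ⟨(va, vb), h1, h2, h3, h4, h5, h6, h7⟩
  choose P hP1 hP2 hP3 hP4 hP5 hP6 hP7 using step
  set S : ∀ k : ℕ, {u : Y → X // Continuous u ∧ ∀ y, ‖u y‖ ≤ (1/2:ℝ)^k} :=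
    natRecAux ⟨Subtype.val, continuous_subtype_val,
        fun y => by rw [y.2]; norm_num⟩
      (fun k prev =>
        ⟨prev.1 - ((P k prev.1 prev.2.1 prev.2.2).1 - (P k prev.1 prev.2.1 prev.2.2).2),
          prev.2.1.sub ((hP1 k prev.1 prev.2.1 prev.2.2).sub (hP2 k prev.1 prev.2.1 prev.2.2)),
          fun y => hP7 k prev.1 prev.2.1 prev.2.2 y⟩) with hS
  set u : ℕ → Y → X := fun k => (S k).1 with hu
  set va : ℕ → Y → X := fun k => (P k (u k) (S k).2.1 (S k).2.2).1 with hva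
  set vb : ℕ → Y → X := fun k => (P k (u k) (S k).2.1 (S k).2.2).2 with hvb
  have hucont : ∀ k, Continuous (u k) := fun k => (S k).2.1
  have hub : ∀ k y, ‖u k y‖ ≤ (1/2:ℝ)^k := fun k => (S k).2.2
  have hrec : ∀ k, u (k+1) = u k - (va k - vb k) := fun k => rfl
  have hu0 : ∀ y : Y, u 0 y = (y : X) := fun y => rfl
  have hvacont : ∀ k, Continuous (va k) := fun k => hP1 k (u k) (S k).2.1 (S k).2.2
  have hvbcont : ∀ k, Continuous (vb k) := fun k => hP2 k (u k) (S k).2.1 (S k).2.2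
  have hvamem : ∀ k y, va k y ∈ Xpos := fun k => hP3 k (u k) (S k).2.1 (S k).2.2
  have hvbmem : ∀ k y, vb k y ∈ Xpos := fun k => hP4 k (u k) (S k).2.1 (S k).2.2
  have hvan : ∀ k y, ‖va k y‖ ≤ M * (1/2:ℝ)^k := fun k => hP5 k (u k) (S k).2.1 (S k).2.2
  have hvbn : ∀ k y, ‖vb k y‖ ≤ M * (1/2:ℝ)^k := fun k => hP6 k (u k) (S k).2.1 (S k).2.2
  have hgeo : Summable (fun k : ℕ => M * (1/2:ℝ)^k) := summable_geometric_two.mul_left _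
  have htsum_geo : (∑' k : ℕ, M * (1/2:ℝ)^k) = 2 * M := by
    rw [tsum_mul_left, tsum_geometric_two]; ring
  set UA : Y → X := fun y => ∑' k, va k y with hUA
  set UB : Y → X := fun y => ∑' k, vb k y with hUB
  have hUAcont : Continuous UA :=
    continuous_tsum hvacont hgeo (fun k y => hvan k y)
  have hUBcont : Continuous UB :=
    continuous_tsum hvbcont hgeo (fun k y => hvbn k y)
  have hsumA : ∀ y, Summable (fun k => va k y) := fun y =>
    Summable.of_norm_bounded hgeo (fun k => hvan k y)
  have hsumB : ∀ y, Summable (fun k => vb k y) := fun y =>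
    Summable.of_norm_bounded hgeo (fun k => hvbn k y)
  have hUAmem : ∀ y, UA y ∈ Xpos := fun y =>
    cone_hasSum_mem hXpos_closed hXpos_add h0 (fun k => hvamem k y) (hsumA y).hasSum
  have hUBmem : ∀ y, UB y ∈ Xpos := fun y =>
    cone_hasSum_mem hXpos_closed hXpos_add h0 (fun k => hvbmem k y) (hsumB y).hasSum
  have hUAn : ∀ y, ‖UA y‖ ≤ 2 * M := by
    intro y
    have hn : Summable (fun k => ‖va k y‖) :=
      Summable.of_nonneg_of_le (fun k => norm_nonneg _) (fun k => hvan k y) hgeo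
    calc ‖UA y‖ ≤ ∑' k, ‖va k y‖ := norm_tsum_le_tsum_norm hn
      _ ≤ ∑' k : ℕ, M * (1/2:ℝ)^k := Summable.tsum_le_tsum (fun k => hvan k y) hn hgeo
      _ = 2 * M := htsum_geo
  have hUBn : ∀ y, ‖UB y‖ ≤ 2 * M := by
    intro y
    have hn : Summable (fun k => ‖vb k y‖) :=
      Summable.of_nonneg_of_le (fun k => norm_nonneg _) (fun k => hvbn k y) hgeo
    calc ‖UB y‖ ≤ ∑' k, ‖vb k y‖ := norm_tsum_le_tsum_norm hn
      _ ≤ ∑' k : ℕ, M * (1/2:ℝ)^k := Summable.tsum_le_tsum (fun k => hvbn k y) hn hgeo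
      _ = 2 * M := htsum_geo
  have hUid : ∀ y : Y, UA y - UB y = (y : X) := by
    intro y
    have hab : HasSum (fun k => va k y - vb k y) (UA y - UB y) :=
      (hsumA y).hasSum.sub (hsumB y).hasSum
    have htel : ∀ m : ℕ, (∑ k ∈ Finset.range m, (va k y - vb k y)) = (y : X) - u m y := by
      intro m
      have hstep : ∀ k, va k y - vb k y = u k y - u (k+1) y := by
        intro k
        rw [hrec k]
        show va k y - vb k y = u k y - (u k y - (va k y - vb k y))
        abel
      calc (∑ k ∈ Finset.range m, (va k y - vb k y))
          = ∑ k ∈ Finset.range m, (u k y - u (k+1) y) :=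
            Finset.sum_congr rfl fun k _ => hstep k
        _ = u 0 y - u m y := Finset.sum_range_sub' (fun k => u k y) m
        _ = (y : X) - u m y := by rw [hu0]
    have hz0 : Tendsto (fun m => u m y) atTop (𝓝 0) := by
      apply squeeze_zero_norm (fun m => hub m y)
      exact tendsto_pow_atTop_nhds_zero_of_lt_one (by norm_num) (by norm_num)
    have h2 : Tendsto (fun m => ∑ k ∈ Finset.range m, (va k y - vb k y)) atTop
        (𝓝 ((y : X))) := by
      simp only [htel]
      have h3 : Tendsto (fun _ : ℕ => (y : X)) atTop (𝓝 ((y : X))) := tendsto_const_nhds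
      simpa using h3.sub hz0
    exact tendsto_nhds_unique hab.tendsto_sum_nat h2
  -- extension to all of X by positive homogeneity
  have hnrm : ∀ x : X, x ≠ 0 → ‖‖x‖⁻¹ • x‖ = 1 := by
    intro x h
    rw [norm_smul, norm_inv, norm_norm, inv_mul_cancel₀ (norm_ne_zero_iff.mpr h)]
  set nrm : ∀ x : X, x ≠ 0 → Y := fun x h => ⟨‖x‖⁻¹ • x, hnrm x h⟩ with hnrmdef
  set ext : (Y → X) → X → X :=
    fun g x => if h : x = 0 then 0 else ‖x‖ • g (nrm x h) with hext
  have hext0 : ∀ g, ext g 0 = 0 := fun g => dif_pos rfl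
  have hextne : ∀ g (x : X) (h : x ≠ 0), ext g x = ‖x‖ • g (nrm x h) :=
    fun g x h => dif_neg h
  have key : ∀ g : Y → X, Continuous g → (∀ y, ‖g y‖ ≤ 2 * M) → (∀ y, g y ∈ Xpos) →
      Continuous (ext g) ∧ (∀ x, ext g x ∈ Xpos) ∧ (∀ x, ‖ext g x‖ ≤ 2 * M * ‖x‖) := by
    intro g hg hgb hgm
    have hb : ∀ x, ‖ext g x‖ ≤ 2 * M * ‖x‖ := by
      intro x
      by_cases h : x = 0
      · simp [h, hext0]
      · rw [hextne g x h, norm_smul, norm_norm]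
        calc ‖x‖ * ‖g (nrm x h)‖ ≤ ‖x‖ * (2 * M) :=
            mul_le_mul_of_nonneg_left (hgb _) (norm_nonneg x)
          _ = 2 * M * ‖x‖ := by ring
    refine ⟨?_, ?_, hb⟩
    · rw [continuous_iff_continuousAt]
      intro x
      by_cases h : x = 0
      · subst h
        unfold ContinuousAt
        rw [hext0]
        apply squeeze_zero_norm hb
        have : Continuous fun x : X => 2 * M * ‖x‖ := continuous_const.mul continuous_norm
        simpa using this.tendsto 0
      · have hopen : IsOpen {x : X | x ≠ 0} := isOpen_ne
        have hco : ContinuousOn (ext g) {x : X | x ≠ 0} := by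
          rw [continuousOn_iff_continuous_restrict]
          have hnz : ∀ p : {x : X | x ≠ 0}, (p : X) ≠ 0 := fun p => p.2
          have hval : Continuous (fun p : {x : X | x ≠ 0} => (p : X)) := continuous_subtype_val
          have h1 : Continuous (fun p : {x : X | x ≠ 0} => nrm (p : X) (hnz p)) := by
            simp only [hnrmdef]
            apply Continuous.subtype_mk
            exact ((hval.norm).inv₀ (fun p => norm_ne_zero_iff.mpr (hnz p))).smul hval
          have h2 : Continuous
              (fun p : {x : X | x ≠ 0} => ‖(p : X)‖ • g (nrm (p : X) (hnz p))) :=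
            (hval.norm).smul (hg.comp h1)
          convert h2 using 1
          funext p
          exact hextne g (p : X) (hnz p)
        exact hco.continuousAt (hopen.mem_nhds h)
    · intro x
      by_cases h : x = 0
      · rw [h, hext0]; exact h0
      · rw [hextne g x h]
        exact hXpos_smul _ (norm_nonneg x) _ (hgm _)
  obtain ⟨hcA, hmA, hbA⟩ := key UA hUAcont hUAn hUAmem
  obtain ⟨hcB, hmB, hbB⟩ := key UB hUBcont hUBn hUBmem
  have hid : ∀ x : X, ext UA x - ext UB x = x := by
    intro x
    by_cases h : x = 0
    · simp [h, hext0]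
    · rw [hextne UA x h, hextne UB x h, ← smul_sub, hUid (nrm x h)]
      show ‖x‖ • ‖x‖⁻¹ • x = x
      rw [smul_smul, mul_inv_cancel₀ (norm_ne_zero_iff.mpr h), one_smul]
  refine ⟨4 * M, by positivity, ?_⟩
  intro f hf hfc
  set fp : Ω → X := fun ω => ext UA (f ω) with hfp
  set fm : Ω → X := fun ω => ext UB (f ω) with hfm
  have hsuppp : tsupport fp ⊆ tsupport f := by
    apply closure_minimal _ (isClosed_tsupport f)
    intro ω hω
    apply subset_closure
    intro h0'
    apply hω
    show ext UA (f ω) = 0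
    rw [h0', hext0]
  have hsuppm : tsupport fm ⊆ tsupport f := by
    apply closure_minimal _ (isClosed_tsupport f)
    intro ω hω
    apply subset_closure
    intro h0'
    apply hω
    show ext UB (f ω) = 0
    rw [h0', hext0]
  refine ⟨fp, fm, hcA.comp hf, hcB.comp hf,
    IsCompact.of_isClosed_subset hfc (isClosed_tsupport fp) hsuppp,
    IsCompact.of_isClosed_subset hfc (isClosed_tsupport fm) hsuppm,
    fun ω => hmA (f ω), fun ω => hmB (f ω),
    fun ω => (hid (f ω)).symm, hsuppp, hsuppm, ?_⟩
  intro ω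
  calc ‖fp ω‖ + ‖fm ω‖ ≤ 2 * M * ‖f ω‖ + 2 * M * ‖f ω‖ := add_le_add (hbA _) (hbB _)
    _ = 4 * M * ‖f ω‖ := by ring
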